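/- Let H be a pencilled hfd line set in PG(5,K) and let L[v₁,κ₁] and L[v₂,κ₂] be two distinct pencils of lines, both entirely contained in H. Then: (i) v₁ ≠ v₂; (ii) the line v₁ + v₂ is contained in κ₁ ∩ κ₂; and (iii) v₁ + v₂ ∈ H. -/

import Mathlib

/-- The Klein quadratic form on `K^6`. -/
def kleinQ {K : Type*} [Field K] (x : Fin 6 → K) : K :=
  x 0 * x 1 + x 2 * x 3 + x 4 * x 5

/-- The polar bilinear form `B(x,y) = Q(x+y) - Q(x) - Q(y)`. -/
def kleinB {K : Type*} [Field K] (x y : Fin 6 → K) : K :=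
  kleinQ (x + y) - kleinQ x - kleinQ y

/-- The polar subspace `π₅(S)` of a subspace `S`. -/
def kleinPolar {K : Type*} [Field K] (S : Submodule K (Fin 6 → K)) :
    Submodule K (Fin 6 → K) where
  carrier := {y | ∀ s ∈ S, kleinB s y = 0}
  add_mem' := by
    intro a b ha hb s hs
    have h1 := ha s hs
    have h2 := hb s hs
    simp only [kleinB, kleinQ, Pi.add_apply] at *
    linear_combination h1 + h2
  zero_mem' := by
    intro s hs
    simp [kleinB, kleinQ]
  smul_mem' := by
    intro c a ha s hs
    have h1 := ha s hs
    simp only [kleinB, kleinQ, Pi.add_apply, Pi.smul_apply, smul_eq_mul] at *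
    linear_combination c * h1

/-- `τ` is a tangent hyperplane of the Klein quadric. -/
def IsTangentHyperplane {K : Type*} [Field K] (τ : Submodule K (Fin 6 → K)) : Prop :=
  ∃ x : Fin 6 → K, x ≠ 0 ∧ kleinQ x = 0 ∧ τ = kleinPolar (Submodule.span K {x})

/-- A subspace is external to the Klein quadric. -/
def IsExternal {K : Type*} [Field K] (S : Submodule K (Fin 6 → K)) : Prop :=
  ∀ s ∈ S, s ≠ 0 → kleinQ s ≠ 0

/-- A `0`-secant of the Klein quadric: an external line. -/
def IsSecant {K : Type*} [Field K] (G : Submodule K (Fin 6 → K)) : Prop :=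
  Module.finrank K G = 2 ∧ IsExternal G

/-- The pencil of lines with vertex `v` and carrier plane `κ`. -/
def pencil {K : Type*} [Field K] (v κ : Submodule K (Fin 6 → K)) :
    Set (Submodule K (Fin 6 → K)) :=
  {X | Module.finrank K X = 2 ∧ v ≤ X ∧ X ≤ κ}

/-- An hfd line set: a set of `0`-secants such that every tangent hyperplane
contains exactly one member. -/
def IsHfd {K : Type*} [Field K] (H : Set (Submodule K (Fin 6 → K))) : Prop :=
  (∀ G ∈ H, IsSecant G) ∧
    ∀ τ : Submodule K (Fin 6 → K), IsTangentHyperplane τ → ∃! G, G ∈ H ∧ G ≤ τ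

/-- A pencilled hfd line set: every member lies in a pencil entirely contained in `H`. -/
def IsPencilledHfd {K : Type*} [Field K] (H : Set (Submodule K (Fin 6 → K))) : Prop :=
  IsHfd H ∧
    ∀ G ∈ H, ∃ v κ : Submodule K (Fin 6 → K), Module.finrank K v = 1 ∧
      Module.finrank K κ = 3 ∧ v ≤ κ ∧ pencil v κ ⊆ H ∧ G ∈ pencil v κ

/-- `v` is a vertex of the pencilled hfd line set `H`. -/
def IsVertex {K : Type*} [Field K] (H : Set (Submodule K (Fin 6 → K)))
    (v : Submodule K (Fin 6 → K)) : Prop :=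
  Module.finrank K v = 1 ∧ ∃ κ : Submodule K (Fin 6 → K),
    Module.finrank K κ = 3 ∧ v ≤ κ ∧ pencil v κ ⊆ H

/-- `κ` is a carrier plane of the pencilled hfd line set `H`. -/
def IsCarrier {K : Type*} [Field K] (H : Set (Submodule K (Fin 6 → K)))
    (κ : Submodule K (Fin 6 → K)) : Prop :=
  Module.finrank K κ = 3 ∧ ∃ v : Submodule K (Fin 6 → K),
    Module.finrank K v = 1 ∧ v ≤ κ ∧ pencil v κ ⊆ H

section Aux

open Module Submodule

variable {K : Type*} [Field K]

lemma kleinB_apply (x y : Fin 6 → K) :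
    kleinB x y = x 0 * y 1 + x 1 * y 0 + x 2 * y 3 + x 3 * y 2 + x 4 * y 5 + x 5 * y 4 := by
  simp only [kleinB, kleinQ, Pi.add_apply]; ring

lemma kleinB_symm (x y : Fin 6 → K) : kleinB x y = kleinB y x := by
  rw [kleinB_apply, kleinB_apply]; ring

lemma kleinB_add_left (x y z : Fin 6 → K) : kleinB (x + y) z = kleinB x z + kleinB y z := by
  simp only [kleinB_apply, Pi.add_apply]; ring

lemma kleinB_smul_left (c : K) (x y : Fin 6 → K) : kleinB (c • x) y = c * kleinB x y := by
  simp only [kleinB_apply, Pi.smul_apply, smul_eq_mul]; ring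

lemma kleinB_smul_right (c : K) (x y : Fin 6 → K) : kleinB x (c • y) = c * kleinB x y := by
  simp only [kleinB_apply, Pi.smul_apply, smul_eq_mul]; ring

lemma kleinQ_add (x y : Fin 6 → K) : kleinQ (x + y) = kleinQ x + kleinB x y + kleinQ y := by
  simp only [kleinB]; ring

/-- The polar form as a mathlib bilinear form. -/
noncomputable def kleinBF : LinearMap.BilinForm K (Fin 6 → K) :=
  LinearMap.mk₂ K kleinB kleinB_add_left
    (fun c x y => by rw [kleinB_smul_left, smul_eq_mul])
    (fun x y z => by rw [kleinB_symm, kleinB_add_left, kleinB_symm y x, kleinB_symm z x])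
    (fun c x y => by rw [kleinB_symm, kleinB_smul_left, kleinB_symm y x, smul_eq_mul])

@[simp] lemma kleinBF_apply (x y : Fin 6 → K) : kleinBF x y = kleinB x y := rfl

lemma kleinBF_isRefl : (kleinBF (K := K)).IsRefl := by
  intro x y h
  simpa [kleinB_symm y x] using h

lemma kleinBF_nondeg : (kleinBF (K := K)).Nondegenerate := by
  refine (LinearMap.IsRefl.nondegenerate_iff_separatingLeft (B := (kleinBF (K := K))) (fun x y h => kleinBF_isRefl x y h)).mpr ?_
  intro x hx
  funext i
  have h0 := hx (Pi.single 1 1)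
  have h1 := hx (Pi.single 0 1)
  have h2 := hx (Pi.single 3 1)
  have h3 := hx (Pi.single 2 1)
  have h4 := hx (Pi.single 5 1)
  have h5 := hx (Pi.single 4 1)
  simp only [kleinBF_apply, kleinB_apply, Pi.single_apply] at h0 h1 h2 h3 h4 h5
  norm_num at h0 h1 h2 h3 h4 h5
  fin_cases i <;> simp_all

lemma mem_kleinPolar {S : Submodule K (Fin 6 → K)} {y : Fin 6 → K} :
    y ∈ kleinPolar S ↔ ∀ s ∈ S, kleinB s y = 0 := Iff.rfl

lemma kleinPolar_eq_orthogonal (S : Submodule K (Fin 6 → K)) :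
    kleinPolar S = kleinBF.orthogonal S := rfl

lemma finrank_kleinPolar (S : Submodule K (Fin 6 → K)) :
    finrank K (kleinPolar S) = 6 - finrank K S := by
  rw [kleinPolar_eq_orthogonal,
    LinearMap.BilinForm.finrank_orthogonal kleinBF_nondeg, Module.finrank_fin_fun]

lemma kleinPolar_antitone {S T : Submodule K (Fin 6 → K)} (h : S ≤ T) :
    kleinPolar T ≤ kleinPolar S := fun y hy s hs => hy s (h hs)

lemma finrank_inf_ge (p q : Submodule K (Fin 6 → K)) :
    finrank K p + finrank K q - 6 ≤ finrank K (p ⊓ q : Submodule K (Fin 6 → K)) := by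
  have h1 := Submodule.finrank_sup_add_finrank_inf_eq p q
  have h2 : finrank K (p ⊔ q : Submodule K (Fin 6 → K)) ≤ 6 := by
    have := Submodule.finrank_le (p ⊔ q)
    rwa [Module.finrank_fin_fun] at this
  omega

end Aux

section Aux2

open Module Submodule

variable {K : Type*} [Field K]

/-- The coordinate subspace `x₁ = x₃ = x₅ = 0`, on which `kleinQ` vanishes. -/
def isoU (K : Type*) [Field K] : Submodule K (Fin 6 → K) where
  carrier := {x | x 1 = 0 ∧ x 3 = 0 ∧ x 5 = 0}
  add_mem' := by
    rintro a b ⟨a1, a3, a5⟩ ⟨b1, b3, b5⟩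
    exact ⟨by simp [a1, b1], by simp [a3, b3], by simp [a5, b5]⟩
  zero_mem' := ⟨rfl, rfl, rfl⟩
  smul_mem' := by
    rintro c a ⟨a1, a3, a5⟩
    exact ⟨by simp [a1], by simp [a3], by simp [a5]⟩

lemma kleinQ_eq_zero_of_mem_isoU {x : Fin 6 → K} (hx : x ∈ isoU K) : kleinQ x = 0 := by
  obtain ⟨h1, h3, h5⟩ := hx
  simp [kleinQ, h1, h3, h5]

/-- A totally singular subspace of dimension 3. -/
noncomputable def isoT (K : Type*) [Field K] : Submodule K (Fin 6 → K) :=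
  Submodule.span K (Set.range fun i : Fin 3 => Pi.single (![0, 2, 4] i) (1 : K))

lemma isoT_le_isoU : isoT K ≤ isoU K := by
  rw [isoT, Submodule.span_le]
  rintro _ ⟨i, rfl⟩
  fin_cases i <;>
    exact ⟨by simp [Pi.single_apply], by simp [Pi.single_apply], by simp [Pi.single_apply]⟩

lemma finrank_isoT : finrank K (isoT K) = 3 := by
  rw [isoT, finrank_span_eq_card, Fintype.card_fin]
  have : (fun i : Fin 3 => Pi.single (M := fun _ : Fin 6 => K) (![0, 2, 4] i) (1 : K)) =
      (fun j : Fin 6 => Pi.single (M := fun _ : Fin 6 => K) j (1 : K)) ∘ ![0, 2, 4] := rfl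
  rw [this]
  apply LinearIndependent.comp
  · have h := (Pi.basisFun K (Fin 6)).linearIndependent
    have he : ⇑(Pi.basisFun K (Fin 6)) = fun j : Fin 6 => Pi.single (M := fun _ : Fin 6 => K) j (1 : K) := by
      funext j; exact Pi.basisFun_apply K (Fin 6) j
    rwa [he] at h
  · decide

lemma kleinQ_eq_zero_of_mem_isoT {x : Fin 6 → K} (hx : x ∈ isoT K) : kleinQ x = 0 :=
  kleinQ_eq_zero_of_mem_isoU (isoT_le_isoU hx)

/-- Given a pencil and an isotropic direction `x` orthogonal to the vertex, some line
of the pencil lies in the tangent hyperplane determined by `x`. -/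
lemma exists_pencil_line_le_tangent (v κ : Submodule K (Fin 6 → K))
    (hv : finrank K v = 1) (hκ : finrank K κ = 3) (hvκ : v ≤ κ)
    (x : Fin 6 → K) (hx0 : x ≠ 0) (hxv : x ∈ kleinPolar v) :
    ∃ G ∈ pencil v κ, G ≤ kleinPolar (Submodule.span K {x}) := by
  set τ := kleinPolar (Submodule.span K {x}) with hτdef
  have hτ : finrank K τ = 5 := by
    rw [hτdef, finrank_kleinPolar, finrank_span_singleton hx0]
  have hvτ : v ≤ τ := by
    intro s hs
    rw [hτdef, mem_kleinPolar]
    intro t ht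
    obtain ⟨c, rfl⟩ := Submodule.mem_span_singleton.mp ht
    rw [kleinB_smul_left, kleinB_symm, hxv s hs, mul_zero]
  have hM : 2 ≤ finrank K (κ ⊓ τ : Submodule K (Fin 6 → K)) := by
    have := finrank_inf_ge κ τ
    omega
  have hvM : v ≤ κ ⊓ τ := le_inf hvκ hvτ
  have hMnle : ¬(κ ⊓ τ : Submodule K (Fin 6 → K)) ≤ v := by
    intro hle
    have := Submodule.finrank_mono hle
    omega
  obtain ⟨w, hwM, hwv⟩ := SetLike.not_le_iff_exists.mp hMnle
  have hw0 : w ≠ 0 := fun h => hwv (h ▸ v.zero_mem)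
  have hinf : v ⊓ Submodule.span K {w} = ⊥ := by
    rw [Submodule.eq_bot_iff]
    rintro z ⟨hzv, hzw⟩
    obtain ⟨c, rfl⟩ := Submodule.mem_span_singleton.mp hzw
    rcases eq_or_ne c 0 with rfl | hc
    · simp
    · have : c⁻¹ • c • w ∈ v := v.smul_mem c⁻¹ hzv
      rw [smul_smul, inv_mul_cancel₀ hc, one_smul] at this
      exact absurd this hwv
  have hrank : finrank K (v ⊔ Submodule.span K {w} : Submodule K (Fin 6 → K)) = 2 := by
    have h1 := Submodule.finrank_sup_add_finrank_inf_eq v (Submodule.span K {w})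
    rw [hinf, finrank_bot, finrank_span_singleton hw0, hv] at h1
    omega
  refine ⟨v ⊔ Submodule.span K {w}, ⟨hrank, le_sup_left, sup_le hvκ ?_⟩,
    sup_le hvτ ?_⟩
  · rw [Submodule.span_le, Set.singleton_subset_iff]
    exact hwM.1
  · rw [Submodule.span_le, Set.singleton_subset_iff]
    exact hwM.2

end Aux2

/-- Lemma 4.8.
For two distinct pencils `L[v₁,κ₁]`, `L[v₂,κ₂]` contained in a pencilled hfd line
set `H` one has `v₁ ≠ v₂`, the line `v₁ ⊔ v₂` lies in `κ₁ ⊓ κ₂`, and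
`v₁ ⊔ v₂ ∈ H`. -/
theorem two_pencils {K : Type*} [Field K]
    (H : Set (Submodule K (Fin 6 → K))) (hH : IsPencilledHfd H)
    (v₁ κ₁ v₂ κ₂ : Submodule K (Fin 6 → K))
    (hv₁ : Module.finrank K v₁ = 1) (hκ₁ : Module.finrank K κ₁ = 3) (h₁ : v₁ ≤ κ₁)
    (hv₂ : Module.finrank K v₂ = 1) (hκ₂ : Module.finrank K κ₂ = 3) (h₂ : v₂ ≤ κ₂)
    (hpen₁ : pencil v₁ κ₁ ⊆ H) (hpen₂ : pencil v₂ κ₂ ⊆ H)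
    (hne : (v₁, κ₁) ≠ (v₂, κ₂)) :
    v₁ ≠ v₂ ∧ (v₁ ⊔ v₂ : Submodule K (Fin 6 → K)) ≤ κ₁ ⊓ κ₂ ∧
      (v₁ ⊔ v₂ : Submodule K (Fin 6 → K)) ∈ H := by
  classical
  open Module Submodule in
  obtain ⟨⟨-, huniq⟩, -⟩ := hH
  -- For every tangent hyperplane orthogonal to both vertices, the unique member of `H`
  -- inside it belongs to both pencils.
  have main : ∀ x : Fin 6 → K, x ≠ 0 → kleinQ x = 0 →
      x ∈ kleinPolar v₁ → x ∈ kleinPolar v₂ →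
      ∃ G ∈ H, Module.finrank K G = 2 ∧ v₁ ≤ G ∧ v₂ ≤ G ∧ G ≤ κ₁ ∧ G ≤ κ₂ ∧
        G ≤ kleinPolar (Submodule.span K {x}) := by
    intro x hx0 hxQ hx1 hx2
    obtain ⟨G₁, hG₁p, hG₁τ⟩ := exists_pencil_line_le_tangent v₁ κ₁ hv₁ hκ₁ h₁ x hx0 hx1
    obtain ⟨G₂, hG₂p, hG₂τ⟩ := exists_pencil_line_le_tangent v₂ κ₂ hv₂ hκ₂ h₂ x hx0 hx2
    have hτt : IsTangentHyperplane (kleinPolar (Submodule.span K {x})) := ⟨x, hx0, hxQ, rfl⟩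
    obtain ⟨G, -, hGuniq⟩ := huniq _ hτt
    have e1 : G₁ = G := hGuniq G₁ ⟨hpen₁ hG₁p, hG₁τ⟩
    have e2 : G₂ = G := hGuniq G₂ ⟨hpen₂ hG₂p, hG₂τ⟩
    refine ⟨G₁, hpen₁ hG₁p, hG₁p.1, hG₁p.2.1, ?_, hG₁p.2.2, ?_, hG₁τ⟩
    · rw [e1, ← e2]; exact hG₂p.2.1
    · rw [e1, ← e2]; exact hG₂p.2.2
  have hv12 : v₁ ≠ v₂ := by
    intro hveq
    have hκne : κ₁ ≠ κ₂ := fun h => hne (by rw [hveq, h])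
    have hsuplt : κ₁ < κ₁ ⊔ κ₂ := by
      refine lt_of_le_of_ne le_sup_left (fun h => hκne ?_)
      have hle : κ₂ ≤ κ₁ := h ▸ le_sup_right
      exact (Submodule.eq_of_le_of_finrank_le hle (by omega)).symm
    have hsup4 : 4 ≤ Module.finrank K (κ₁ ⊔ κ₂ : Submodule K (Fin 6 → K)) := by
      have := Submodule.finrank_lt_finrank_of_lt hsuplt
      omega
    have hG₀le : Module.finrank K (κ₁ ⊓ κ₂ : Submodule K (Fin 6 → K)) ≤ 2 := by
      have := Submodule.finrank_sup_add_finrank_inf_eq κ₁ κ₂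
      omega
    have hvG₀ : v₁ ≤ κ₁ ⊓ κ₂ := le_inf h₁ (hveq ▸ h₂)
    have key : ∀ x : Fin 6 → K, x ≠ 0 → kleinQ x = 0 → x ∈ kleinPolar v₁ →
        x ∈ kleinPolar (κ₁ ⊓ κ₂) ∧ Module.finrank K (κ₁ ⊓ κ₂ : Submodule K (Fin 6 → K)) = 2 := by
      intro x hx0 hxQ hx1
      obtain ⟨G, hGH, hG2, hGa, hGb, hGκa, hGκb, hGτ⟩ :=
        main x hx0 hxQ hx1 (hveq ▸ hx1)
      have hGeq : G = κ₁ ⊓ κ₂ :=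
        Submodule.eq_of_le_of_finrank_le (le_inf hGκa hGκb) (by omega)
      refine ⟨?_, by rw [← hGeq]; exact hG2⟩
      rw [mem_kleinPolar]
      intro s hs
      rw [kleinB_symm]
      have hsG : s ∈ G := by rw [hGeq]; exact hs
      exact hGτ hsG x (Submodule.mem_span_singleton_self x)
    have hP5 : Module.finrank K (kleinPolar v₁) = 5 := by rw [finrank_kleinPolar, hv₁]
    have hW2 : 2 ≤ Module.finrank K (isoT K ⊓ kleinPolar v₁ : Submodule K (Fin 6 → K)) := by
      have h := finrank_inf_ge (isoT K) (kleinPolar v₁)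
      rw [finrank_isoT, hP5] at h
      omega
    have hWne : (isoT K ⊓ kleinPolar v₁ : Submodule K (Fin 6 → K)) ≠ ⊥ := by
      intro h
      rw [h, finrank_bot] at hW2
      omega
    obtain ⟨x₀, hx₀W, hx₀0⟩ := Submodule.ne_bot_iff _ |>.mp hWne
    have hG₀2 : Module.finrank K (κ₁ ⊓ κ₂ : Submodule K (Fin 6 → K)) = 2 :=
      (key x₀ hx₀0 (kleinQ_eq_zero_of_mem_isoT hx₀W.1) hx₀W.2).2
    have hP4 : Module.finrank K (kleinPolar (κ₁ ⊓ κ₂)) = 4 := by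
      rw [finrank_kleinPolar, hG₀2]
    have hnle : ¬ kleinPolar v₁ ≤ kleinPolar (κ₁ ⊓ κ₂) := by
      intro h
      have := Submodule.finrank_mono h
      omega
    obtain ⟨y₀, hy₀5, hy₀4⟩ := SetLike.not_le_iff_exists.mp hnle
    have hWP4 : ∀ w ∈ (isoT K ⊓ kleinPolar v₁ : Submodule K (Fin 6 → K)),
        w ∈ kleinPolar (κ₁ ⊓ κ₂) := by
      intro w hw
      rcases eq_or_ne w 0 with rfl | hw0
      · exact zero_mem _
      · exact (key w hw0 (kleinQ_eq_zero_of_mem_isoT hw.1) hw.2).1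
    have step1 : ∀ y, y ∈ kleinPolar v₁ → y ∉ kleinPolar (κ₁ ⊓ κ₂) →
        ∀ w ∈ (isoT K ⊓ kleinPolar v₁ : Submodule K (Fin 6 → K)), kleinB y w = 0 := by
      intro y hy5 hy4 w hw
      by_contra hc
      set w' : Fin 6 → K := (-kleinQ y / kleinB y w) • w with hw'def
      have hw'W : w' ∈ (isoT K ⊓ kleinPolar v₁ : Submodule K (Fin 6 → K)) :=
        Submodule.smul_mem _ _ hw
      have hQ : kleinQ (y + w') = 0 := by
        rw [kleinQ_add, kleinQ_eq_zero_of_mem_isoT hw'W.1, hw'def, kleinB_smul_right]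
        field_simp
        ring
      have hyw5 : y + w' ∈ kleinPolar v₁ := add_mem hy5 hw'W.2
      have hyw0 : y + w' ≠ 0 := by
        intro h
        apply hy4
        have : y = (y + w') - w' := by abel
        rw [this, h, zero_sub]
        exact neg_mem (hWP4 w' hw'W)
      have hyw4 := (key (y + w') hyw0 hQ hyw5).1
      apply hy4
      have : y = (y + w') - w' := by abel
      rw [this]
      exact sub_mem hyw4 (hWP4 w' hw'W)
    have step2 : ∀ z ∈ kleinPolar v₁,
        ∀ w ∈ (isoT K ⊓ kleinPolar v₁ : Submodule K (Fin 6 → K)), kleinB z w = 0 := by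
      intro z hz w hw
      by_cases hz4 : z ∈ kleinPolar (κ₁ ⊓ κ₂)
      · have hy₀z4 : y₀ + z ∉ kleinPolar (κ₁ ⊓ κ₂) := by
          intro h
          apply hy₀4
          have : y₀ = (y₀ + z) - z := by abel
          rw [this]
          exact sub_mem h hz4
        have h1 := step1 (y₀ + z) (add_mem hy₀5 hz) hy₀z4 w hw
        have h2 := step1 y₀ hy₀5 hy₀4 w hw
        rw [kleinB_add_left, h2, zero_add] at h1
        exact h1
      · exact step1 z hz hz4 w hw
    have hWle : (isoT K ⊓ kleinPolar v₁ : Submodule K (Fin 6 → K)) ≤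
        kleinPolar (kleinPolar v₁) := by
      intro w hw
      rw [mem_kleinPolar]
      intro s hs
      exact step2 s hs w hw
    have h1 : Module.finrank K (kleinPolar (kleinPolar v₁)) = 1 := by
      rw [finrank_kleinPolar, hP5]
    have := Submodule.finrank_mono hWle
    omega
  -- parts (ii) and (iii)
  have hinf0 : Module.finrank K (v₁ ⊓ v₂ : Submodule K (Fin 6 → K)) = 0 := by
    have hlt : (v₁ ⊓ v₂ : Submodule K (Fin 6 → K)) < v₁ := by
      refine lt_of_le_of_ne inf_le_left (fun h => hv12 ?_)
      have hle : v₁ ≤ v₂ := h ▸ inf_le_right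
      exact Submodule.eq_of_le_of_finrank_le hle (by omega)
    have := Submodule.finrank_lt_finrank_of_lt hlt
    omega
  have hLrank : Module.finrank K (v₁ ⊔ v₂ : Submodule K (Fin 6 → K)) = 2 := by
    have := Submodule.finrank_sup_add_finrank_inf_eq v₁ v₂
    omega
  have hPL : Module.finrank K (kleinPolar (v₁ ⊔ v₂)) = 4 := by
    rw [finrank_kleinPolar, hLrank]
  have hTge : 1 ≤ Module.finrank K
      (isoT K ⊓ kleinPolar (v₁ ⊔ v₂) : Submodule K (Fin 6 → K)) := by
    have h := finrank_inf_ge (isoT K) (kleinPolar (v₁ ⊔ v₂))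
    rw [finrank_isoT, hPL] at h
    omega
  have hTne : (isoT K ⊓ kleinPolar (v₁ ⊔ v₂) : Submodule K (Fin 6 → K)) ≠ ⊥ := by
    intro h
    rw [h, finrank_bot] at hTge
    omega
  obtain ⟨x, hxW, hx0⟩ := Submodule.ne_bot_iff _ |>.mp hTne
  have hx1 : x ∈ kleinPolar v₁ := kleinPolar_antitone le_sup_left hxW.2
  have hx2 : x ∈ kleinPolar v₂ := kleinPolar_antitone le_sup_right hxW.2
  obtain ⟨G, hGH, hG2, hGa, hGb, hGκa, hGκb, -⟩ :=
    main x hx0 (kleinQ_eq_zero_of_mem_isoT hxW.1) hx1 hx2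
  have hLG : (v₁ ⊔ v₂ : Submodule K (Fin 6 → K)) = G :=
    Submodule.eq_of_le_of_finrank_le (sup_le hGa hGb) (by omega)
  exact ⟨hv12, hLG ▸ le_inf hGκa hGκb, hLG ▸ hGH⟩
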